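/- Let u : ℝ² → ℝ be a smooth (C^∞) function of (x,t) satisfying the mKdV equation u_t = u_xxx − 6 u² u_x. Then the Miura transform u' := u_x − u² satisfies the KdV equation u'_t = u'_xxx + 6 u' u'_x. -/

import Mathlib

/-- Partial derivative in the first variable `x`. -/
noncomputable def px (f : ℝ → ℝ → ℝ) : ℝ → ℝ → ℝ := fun x t => deriv (fun y => f y t) x

/-- Partial derivative in the second variable `t`. -/
noncomputable def pt (f : ℝ → ℝ → ℝ) : ℝ → ℝ → ℝ := fun x t => deriv (fun s => f x s) t

/-- Directional derivative of a function on the plane. -/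
noncomputable def DD (w : ℝ × ℝ) (f : ℝ × ℝ → ℝ) : ℝ × ℝ → ℝ := fun p => fderiv ℝ f p w

lemma DD_smooth {f : ℝ × ℝ → ℝ} (hf : ContDiff ℝ (⊤ : ℕ∞) f) (w : ℝ × ℝ) :
    ContDiff ℝ (⊤ : ℕ∞) (DD w f) :=
  (ContinuousLinearMap.apply ℝ ℝ w).contDiff.comp (hf.fderiv_right (m := (⊤:ℕ∞)) (by exact_mod_cast le_refl _))

lemma DD_sub {f g : ℝ × ℝ → ℝ} {p w : ℝ × ℝ} (hf : DifferentiableAt ℝ f p)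
    (hg : DifferentiableAt ℝ g p) :
    DD w (fun q => f q - g q) p = DD w f p - DD w g p := by
  simp [DD, fderiv_fun_sub hf hg]

lemma DD_mul {f g : ℝ × ℝ → ℝ} {p w : ℝ × ℝ} (hf : DifferentiableAt ℝ f p)
    (hg : DifferentiableAt ℝ g p) :
    DD w (fun q => f q * g q) p = f p * DD w g p + g p * DD w f p := by
  simp [DD, fderiv_fun_mul hf hg]

lemma DD_const_mul {f : ℝ × ℝ → ℝ} {p w : ℝ × ℝ} (c : ℝ) (hf : DifferentiableAt ℝ f p) :
    DD w (fun q => c * f q) p = c * DD w f p := by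
  simp [DD, fderiv_const_mul hf]

lemma DD_sq {f : ℝ × ℝ → ℝ} {p w : ℝ × ℝ} (hf : DifferentiableAt ℝ f p) :
    DD w (fun q => f q ^ 2) p = 2 * f p * DD w f p := by
  have h : (fun q => f q ^ 2) = fun q => f q * f q := by funext q; ring
  rw [h, DD_mul hf hf]; ring

lemma DD_cmul_mul {f g : ℝ × ℝ → ℝ} {p w : ℝ × ℝ} (c : ℝ) (hf : DifferentiableAt ℝ f p)
    (hg : DifferentiableAt ℝ g p) :
    DD w (fun q => c * f q * g q) p = c * f p * DD w g p + c * g p * DD w f p := by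
  have h : (fun q => c * f q * g q) = fun q => c * (f q * g q) := by funext q; ring
  rw [h, DD_const_mul (f := fun q => f q * g q) c (hf.mul hg), DD_mul hf hg]; ring

lemma DD_comm {f : ℝ × ℝ → ℝ} (hf : ContDiff ℝ (⊤ : ℕ∞) f) (v w p : ℝ × ℝ) :
    DD v (DD w f) p = DD w (DD v f) p := by
  have hd : ∀ y, HasFDerivAt f (fderiv ℝ f y) y := fun y =>
    (hf.differentiable (by simp) y).hasFDerivAt
  have h2 : DifferentiableAt ℝ (fderiv ℝ f) p :=
    (hf.fderiv_right (m := (⊤:ℕ∞)) (by exact_mod_cast le_refl _)).differentiable (by simp) p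
  have hsymm := second_derivative_symmetric hd h2.hasFDerivAt
  have key : ∀ a : ℝ × ℝ,
      fderiv ℝ (fun q => fderiv ℝ f q a) p = (ContinuousLinearMap.apply ℝ ℝ a).comp
        (fderiv ℝ (fderiv ℝ f) p) := by
    intro a
    exact ((ContinuousLinearMap.apply ℝ ℝ a).hasFDerivAt.comp p h2.hasFDerivAt).fderiv
  show fderiv ℝ (fun q => fderiv ℝ f q w) p v = fderiv ℝ (fun q => fderiv ℝ f q v) p w
  rw [key w, key v]
  exact hsymm v w

lemma px_curry (g : ℝ × ℝ → ℝ) (hg : Differentiable ℝ g) (x t : ℝ) :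
    px (fun a b => g (a, b)) x t = DD (1, 0) g (x, t) := by
  have h1 : HasDerivAt (fun y : ℝ => ((y, t) : ℝ × ℝ)) ((1 : ℝ), (0 : ℝ)) x :=
    (hasDerivAt_id x).prodMk (hasDerivAt_const x t)
  have h2 := (hg (x, t)).hasFDerivAt.comp_hasDerivAt x h1
  exact h2.deriv

lemma pt_curry (g : ℝ × ℝ → ℝ) (hg : Differentiable ℝ g) (x t : ℝ) :
    pt (fun a b => g (a, b)) x t = DD (0, 1) g (x, t) := by
  have h1 : HasDerivAt (fun s : ℝ => ((x, s) : ℝ × ℝ)) ((0 : ℝ), (1 : ℝ)) t :=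
    (hasDerivAt_const t x).prodMk (hasDerivAt_id t)
  have h2 := (hg (x, t)).hasFDerivAt.comp_hasDerivAt t h1
  exact h2.deriv

/-- the Miura transformation `u' = u_x − u²` maps solutions of the mKdV
equation `u_t = u_xxx − 6u²u_x` to solutions of the KdV equation
`u'_t = u'_xxx + 6u'u'_x`. -/
theorem miura (u : ℝ → ℝ → ℝ)
    (hu : ContDiff ℝ (⊤ : ℕ∞) (Function.uncurry u))
    (hmkdv : ∀ x t, pt u x t = px (px (px u)) x t - 6 * (u x t) ^ 2 * px u x t) :
    ∀ x t,
      pt (fun x t => px u x t - (u x t) ^ 2) x t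
        = px (px (px (fun x t => px u x t - (u x t) ^ 2))) x t
          + 6 * (px u x t - (u x t) ^ 2)
            * px (fun x t => px u x t - (u x t) ^ 2) x t := by
  intro x t
  set F : ℝ × ℝ → ℝ := Function.uncurry u with hFdef
  have hF : ContDiff ℝ (⊤ : ℕ∞) F := hu
  have hFd : Differentiable ℝ F := hF.differentiable (by simp)
  set f1 : ℝ × ℝ → ℝ := DD (1, 0) F with hf1def
  set f2 : ℝ × ℝ → ℝ := DD (1, 0) f1 with hf2def
  set f3 : ℝ × ℝ → ℝ := DD (1, 0) f2 with hf3def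
  have hc1 : ContDiff ℝ (⊤ : ℕ∞) f1 := DD_smooth hF _
  have hc2 : ContDiff ℝ (⊤ : ℕ∞) f2 := DD_smooth hc1 _
  have hc3 : ContDiff ℝ (⊤ : ℕ∞) f3 := DD_smooth hc2 _
  have hd1 : Differentiable ℝ f1 := hc1.differentiable (by simp)
  have hd2 : Differentiable ℝ f2 := hc2.differentiable (by simp)
  have hd3 : Differentiable ℝ f3 := hc3.differentiable (by simp)
  -- curried derivatives of u
  have e0 : ∀ a b, px u a b = f1 (a, b) := fun a b => px_curry F hFd a b
  have e0' : px u = fun a b => f1 (a, b) := funext fun a => funext fun b => e0 a b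
  have e1 : ∀ a b, px (px u) a b = f2 (a, b) := by
    intro a b; rw [e0']; exact px_curry f1 hd1 a b
  have e1' : px (px u) = fun a b => f2 (a, b) := funext fun a => funext fun b => e1 a b
  have e2 : ∀ a b, px (px (px u)) a b = f3 (a, b) := by
    intro a b; rw [e1']; exact px_curry f2 hd2 a b
  have et : ∀ a b, pt u a b = DD (0, 1) F (a, b) := fun a b => pt_curry F hFd a b
  -- mKdV in directional-derivative form
  have hm : ∀ p : ℝ × ℝ, DD (0, 1) F p = f3 p - 6 * F p ^ 2 * f1 p := by
    rintro ⟨a, b⟩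
    have h0 := hmkdv a b
    rw [et a b, e2 a b, e0 a b] at h0
    exact h0
  have hm' : DD (0, 1) F = fun p => f3 p - 6 * F p ^ 2 * f1 p := funext hm
  -- the Miura transform
  set G : ℝ × ℝ → ℝ := fun p => f1 p - F p ^ 2 with hGdef
  have hGs : ContDiff ℝ (⊤ : ℕ∞) G := hc1.sub (hF.pow 2)
  have hGd : Differentiable ℝ G := hGs.differentiable (by simp)
  have hvfun : (fun a b => px u a b - (u a b) ^ 2) = (fun a b => G (a, b)) := by
    funext a b; rw [e0 a b]; rfl
  rw [hvfun, e0 x t]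
  set g1 : ℝ × ℝ → ℝ := DD (1, 0) G with hg1def
  set g2 : ℝ × ℝ → ℝ := DD (1, 0) g1 with hg2def
  have hg1s : ContDiff ℝ (⊤ : ℕ∞) g1 := DD_smooth hGs _
  have hg2s : ContDiff ℝ (⊤ : ℕ∞) g2 := DD_smooth hg1s _
  have hg1d : Differentiable ℝ g1 := hg1s.differentiable (by simp)
  have hg2d : Differentiable ℝ g2 := hg2s.differentiable (by simp)
  have q0 : ∀ a b, px (fun a b => G (a, b)) a b = g1 (a, b) := fun a b => px_curry G hGd a b
  have q0' : px (fun a b => G (a, b)) = fun a b => g1 (a, b) :=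
    funext fun a => funext fun b => q0 a b
  have q1 : ∀ a b, px (px (fun a b => G (a, b))) a b = g2 (a, b) := by
    intro a b; rw [q0']; exact px_curry g1 hg1d a b
  have q1' : px (px (fun a b => G (a, b))) = fun a b => g2 (a, b) :=
    funext fun a => funext fun b => q1 a b
  have q2 : px (px (px (fun a b => G (a, b)))) x t = DD (1, 0) g2 (x, t) := by
    rw [q1']; exact px_curry g2 hg2d x t
  rw [pt_curry G hGd x t, q2, q0 x t]
  -- now everything is in terms of DD
  set p : ℝ × ℝ := (x, t) with hpdef
  have huF : u x t = F p := rfl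
  rw [huF]
  -- pointwise formulas for the x-derivatives of G
  have hG1 : ∀ q, g1 q = f2 q - 2 * F q * f1 q := by
    intro q
    rw [hg1def, hGdef, DD_sub (hd1 q) ((hF.pow 2).differentiable (by simp) q), DD_sq (hFd q)]
  have hG1' : g1 = fun q => f2 q - 2 * F q * f1 q := funext hG1
  have hG2 : ∀ q, g2 q = f3 q - (2 * F q * f2 q + 2 * f1 q * f1 q) := by
    intro q
    rw [hg2def, hG1', DD_sub (g := fun q => 2 * F q * f1 q) (hd2 q) (((hFd q).const_mul 2).mul (hd1 q)),
      DD_cmul_mul 2 (hFd q) (hd1 q)]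
  have hG2' : g2 = fun q => f3 q - (2 * F q * f2 q + 2 * f1 q * f1 q) := funext hG2
  have hG3 : DD (1, 0) g2 p
      = DD (1, 0) f3 p - ((2 * F p * f3 p + 2 * f2 p * f1 p)
          + (2 * f1 p * f2 p + 2 * f1 p * f2 p)) := by
    rw [hG2']
    have hA : DifferentiableAt ℝ (fun q => 2 * F q * f2 q) p := ((hFd p).const_mul 2).mul (hd2 p)
    have hB : DifferentiableAt ℝ (fun q => 2 * f1 q * f1 q) p := ((hd1 p).const_mul 2).mul (hd1 p)
    have hadd : (fun q => 2 * F q * f2 q + 2 * f1 q * f1 q)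
        = fun q => (fun q => 2 * F q * f2 q) q + (fun q => 2 * f1 q * f1 q) q := rfl
    rw [DD_sub (g := fun q => 2 * F q * f2 q + 2 * f1 q * f1 q) (hd3 p) (hA.add hB)]
    congr 1
    have : DD (1, 0) (fun q => 2 * F q * f2 q + 2 * f1 q * f1 q) p
        = DD (1, 0) (fun q => 2 * F q * f2 q) p + DD (1, 0) (fun q => 2 * f1 q * f1 q) p := by
      simp only [DD, fderiv_fun_add hA hB]; rfl
    rw [this, DD_cmul_mul 2 (hFd p) (hd2 p), DD_cmul_mul 2 (hd1 p) (hd1 p)]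
  -- derivative of the mKdV right-hand side
  have hmx : DD (1, 0) (DD (0, 1) F) p
      = DD (1, 0) f3 p - (6 * F p ^ 2 * f2 p + 6 * f1 p * (2 * F p * f1 p)) := by
    rw [hm']
    rw [DD_sub (g := fun q => 6 * F q ^ 2 * f1 q) (hd3 p) ((((hF.pow 2).differentiable (by simp) p).const_mul 6).mul (hd1 p)),
      DD_cmul_mul 6 ((hF.pow 2).differentiable (by simp) p) (hd1 p), DD_sq (hFd p)]
  -- left-hand side: t-derivative of G
  have hL : DD (0, 1) G p = DD (1, 0) (DD (0, 1) F) p - 2 * F p * (f3 p - 6 * F p ^ 2 * f1 p) := by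
    rw [hGdef, DD_sub (hd1 p) ((hF.pow 2).differentiable (by simp) p), DD_sq (hFd p),
      hf1def, DD_comm hF (0, 1) (1, 0) p, hm p]
  rw [hL, hmx, hG3, hG1 p]
  ring
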